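/- Let R > 0, let c > 0, η > 0, K > 0 and ε, v_R be real numbers with v_R ≠ 0. Let ψ, γ : (R,∞) → ℝ be twice continuously differentiable, let p : (R,∞) → ℝ, and let v : [R,∞) → ℝ be continuous with v(R) = v_R and differentiable on (R,∞), and suppose that for all ρ ∈ (R,∞) the following seven equations hold: (i) e^{2ψ−2γ}[ψ'² + γ'' − 2(ψ'' + ψ'/ρ)] = εK; (ii) cη v² e^{2γ−3ψ}(γ' − ψ') = 0; (iii) (ε + p) e^{2γ−2ψ} v = 0; (iv) ψ'² − γ'/ρ = K p e^{2γ−2ψ}; (v) cη v' e^{2γ−3ψ} = 0; (vi) −ψ'² + γ'/ρ = K[p e^{2γ−2ψ} + (ε + p) e^{4γ−6ψ} v²]; (vii) ψ'² + γ'' = −K p e^{2γ−2ψ}. Then: v(ρ) = v_R for all ρ ≥ R; p(ρ) = 0 for all ρ > R; ε = 0; γ − ψ is constant on (R,∞); and there exist k₁ ∈ {0,1} and k₂, k₃ ∈ ℝ such that ψ(ρ) = k₁ log ρ + k₂ and γ(ρ) = k₁ log ρ + k₃ for all ρ ∈ (R,∞). -/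

import Mathlib

open Set in
lemma const_on_Ioi_of_deriv_zero {R : ℝ} {f : ℝ → ℝ}
    (hd : ∀ x ∈ Set.Ioi R, DifferentiableAt ℝ f x)
    (h0 : ∀ x ∈ Set.Ioi R, deriv f x = 0) :
    ∀ x ∈ Set.Ioi R, ∀ y ∈ Set.Ioi R, f x = f y := fun x hx y hy =>
  (convex_Ioi R).is_const_of_fderivWithin_eq_zero
    (fun z hz => (hd z hz).differentiableWithinAt)
    (fun z hz => by
      rw [fderivWithin_of_isOpen isOpen_Ioi hz, ← toSpanSingleton_deriv, h0 z hz]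
      ext; simp) hx hy
theorem poiseuille_like_solution
    (R : ℝ) (hR : 0 < R)
    (c η K : ℝ) (hc : 0 < c) (hη : 0 < η) (hK : 0 < K)
    (ε vR : ℝ) (hvR : vR ≠ 0)
    (ψ γ p v : ℝ → ℝ)
    (hψ : ContDiffOn ℝ 2 ψ (Set.Ioi R)) (hγ : ContDiffOn ℝ 2 γ (Set.Ioi R))
    (hvcont : ContinuousOn v (Set.Ici R)) (hvR' : v R = vR)
    (hvd : ∀ ρ ∈ Set.Ioi R, DifferentiableAt ℝ v ρ)
    (e₁ : ∀ ρ ∈ Set.Ioi R, Real.exp (2 * ψ ρ - 2 * γ ρ)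
      * ((deriv ψ ρ) ^ 2 + deriv (deriv γ) ρ
          - 2 * (deriv (deriv ψ) ρ + deriv ψ ρ / ρ)) = ε * K)
    (e₂ : ∀ ρ ∈ Set.Ioi R, c * η * (v ρ) ^ 2 * Real.exp (2 * γ ρ - 3 * ψ ρ)
      * (deriv γ ρ - deriv ψ ρ) = 0)
    (e₃ : ∀ ρ ∈ Set.Ioi R, (ε + p ρ) * Real.exp (2 * γ ρ - 2 * ψ ρ) * v ρ = 0)
    (e₄ : ∀ ρ ∈ Set.Ioi R, (deriv ψ ρ) ^ 2 - deriv γ ρ / ρ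
      = K * p ρ * Real.exp (2 * γ ρ - 2 * ψ ρ))
    (e₅ : ∀ ρ ∈ Set.Ioi R, c * η * deriv v ρ * Real.exp (2 * γ ρ - 3 * ψ ρ) = 0)
    (e₆ : ∀ ρ ∈ Set.Ioi R, -(deriv ψ ρ) ^ 2 + deriv γ ρ / ρ
      = K * (p ρ * Real.exp (2 * γ ρ - 2 * ψ ρ)
          + (ε + p ρ) * Real.exp (4 * γ ρ - 6 * ψ ρ) * (v ρ) ^ 2))
    (e₇ : ∀ ρ ∈ Set.Ioi R, (deriv ψ ρ) ^ 2 + deriv (deriv γ) ρ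
      = -(K * p ρ * Real.exp (2 * γ ρ - 2 * ψ ρ))) :
    (∀ ρ ∈ Set.Ici R, v ρ = vR) ∧
    (∀ ρ ∈ Set.Ioi R, p ρ = 0) ∧
    ε = 0 ∧
    (∃ C : ℝ, ∀ ρ ∈ Set.Ioi R, γ ρ - ψ ρ = C) ∧
    (∃ k₁ ∈ ({0, 1} : Set ℝ), ∃ k₂ k₃ : ℝ, ∀ ρ ∈ Set.Ioi R,
      ψ ρ = k₁ * Real.log ρ + k₂ ∧ γ ρ = k₁ * Real.log ρ + k₃) := by
  have hR1 : R + 1 ∈ Set.Ioi R := by simp only [Set.mem_Ioi]; linarith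
  -- Step 1: deriv v = 0 on Ioi R
  have hdv0 : ∀ ρ ∈ Set.Ioi R, deriv v ρ = 0 := by
    intro ρ hρ
    have h := e₅ ρ hρ
    rcases mul_eq_zero.1 h with h' | h'
    · rcases mul_eq_zero.1 h' with h'' | h''
      · exact absurd h'' (mul_ne_zero hc.ne' hη.ne')
      · exact h''
    · exact absurd h' (Real.exp_pos _).ne'
  -- Step 2: v ≡ vR on Ici R
  have hvconst : ∀ ρ ∈ Set.Ici R, v ρ = vR := by
    have hdiff : DifferentiableOn ℝ v (interior (Set.Ici R)) := by
      rw [interior_Ici]; exact fun x hx => (hvd x hx).differentiableWithinAt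
    have mono := monotoneOn_of_deriv_nonneg (convex_Ici R) hvcont hdiff
      (fun x hx => by rw [interior_Ici] at hx; rw [hdv0 x hx])
    have anti := antitoneOn_of_deriv_nonpos (convex_Ici R) hvcont hdiff
      (fun x hx => by rw [interior_Ici] at hx; rw [hdv0 x hx])
    intro ρ hρ
    have h1 := mono Set.self_mem_Ici hρ hρ
    have h2 := anti Set.self_mem_Ici hρ hρ
    rw [hvR'] at h1 h2
    linarith
  have hvIoi : ∀ ρ ∈ Set.Ioi R, v ρ = vR := fun ρ hρ => hvconst ρ (Set.mem_Ici.2 (le_of_lt hρ))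
  -- Step 3: ε + p = 0 on Ioi R
  have hεp : ∀ ρ ∈ Set.Ioi R, ε + p ρ = 0 := by
    intro ρ hρ
    have h3 := e₃ ρ hρ
    rcases mul_eq_zero.1 h3 with h' | h'
    · rcases mul_eq_zero.1 h' with h'' | h''
      · exact h''
      · exact absurd h'' (Real.exp_pos _).ne'
    · rw [hvIoi ρ hρ] at h'; exact absurd h' hvR
  -- Step 4: p = 0 on Ioi R
  have hp0 : ∀ ρ ∈ Set.Ioi R, p ρ = 0 := by
    intro ρ hρ
    have h4 := e₄ ρ hρ
    have h6 := e₆ ρ hρ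
    have key : K * p ρ * Real.exp (2 * γ ρ - 2 * ψ ρ) = 0 := by
      linear_combination (-1/2 : ℝ) * h4 + (-1/2 : ℝ) * h6
        + (-(K * Real.exp (4 * γ ρ - 6 * ψ ρ) * (v ρ) ^ 2) / 2) * hεp ρ hρ
    by_contra hne
    exact mul_ne_zero (mul_ne_zero hK.ne' hne) (Real.exp_pos _).ne' key
  -- Step 5: ε = 0
  have hε0 : ε = 0 := by
    have h1 := hεp (R + 1) hR1
    have h2 := hp0 (R + 1) hR1
    linarith
  -- differentiability
  have hψd : ∀ ρ ∈ Set.Ioi R, DifferentiableAt ℝ ψ ρ := fun ρ hρ =>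
    (hψ.differentiableOn two_ne_zero).differentiableAt (Ioi_mem_nhds hρ)
  have hγd : ∀ ρ ∈ Set.Ioi R, DifferentiableAt ℝ γ ρ := fun ρ hρ =>
    (hγ.differentiableOn two_ne_zero).differentiableAt (Ioi_mem_nhds hρ)
  -- Step 6: deriv γ = deriv ψ on Ioi R
  have hγψ : ∀ ρ ∈ Set.Ioi R, deriv γ ρ = deriv ψ ρ := by
    intro ρ hρ
    have h2 := e₂ ρ hρ
    have hfac : c * η * (v ρ) ^ 2 * Real.exp (2 * γ ρ - 3 * ψ ρ) ≠ 0 := by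
      rw [hvIoi ρ hρ]
      exact mul_ne_zero (mul_ne_zero (mul_ne_zero hc.ne' hη.ne') (pow_ne_zero 2 hvR))
        (Real.exp_pos _).ne'
    have := (mul_eq_zero.1 h2).resolve_left hfac
    linarith
  -- Step 7: γ - ψ is constant
  have hCconst := const_on_Ioi_of_deriv_zero (f := fun x => γ x - ψ x)
    (fun x hx => (hγd x hx).sub (hψd x hx))
    (fun x hx => by rw [deriv_fun_sub (hγd x hx) (hψd x hx), hγψ x hx, sub_self])
  set C := γ (R + 1) - ψ (R + 1) with hCdef
  have hC : ∀ ρ ∈ Set.Ioi R, γ ρ - ψ ρ = C := fun ρ hρ => hCconst ρ hρ (R + 1) hR1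
  -- Step 8: ψ'^2 = ψ'/ρ, so ρψ' ∈ {0,1}
  have hf01 : ∀ ρ ∈ Set.Ioi R, ρ * deriv ψ ρ = 0 ∨ ρ * deriv ψ ρ = 1 := by
    intro ρ hρ
    have hρ0 : ρ ≠ 0 := (hR.trans hρ).ne'
    have h4 := e₄ ρ hρ
    rw [hp0 ρ hρ, hγψ ρ hρ] at h4
    have h : (deriv ψ ρ) ^ 2 = deriv ψ ρ / ρ := by
      have : K * 0 * Real.exp (2 * γ ρ - 2 * ψ ρ) = 0 := by ring
      linarith
    have hz : (ρ * deriv ψ ρ) * (ρ * deriv ψ ρ - 1) = 0 := by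
      have h2 : deriv ψ ρ ^ 2 * ρ = deriv ψ ρ := by
        rw [h]; field_simp
      linear_combination ρ * h2
    rcases mul_eq_zero.1 hz with h' | h'
    · exact Or.inl h'
    · exact Or.inr (by linarith)
  -- Step 9: ρ ↦ ρ * deriv ψ ρ is constant by IVT
  have hcf : ContinuousOn (fun ρ => ρ * deriv ψ ρ) (Set.Ioi R) :=
    continuousOn_id.mul (hψ.continuousOn_deriv_of_isOpen isOpen_Ioi one_le_two)
  have ivt : ∀ a ∈ Set.Ioi R, ∀ b ∈ Set.Ioi R,
      ¬(a * deriv ψ a = 0 ∧ b * deriv ψ b = 1) := by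
    rintro a ha b hb ⟨ha0, hb1⟩
    have hsub : Set.uIcc a b ⊆ Set.Ioi R := Set.ordConnected_Ioi.uIcc_subset ha hb
    have hmem : (1 / 2 : ℝ) ∈ Set.uIcc (a * deriv ψ a) (b * deriv ψ b) := by
      rw [ha0, hb1, Set.uIcc_of_le (by norm_num : (0:ℝ) ≤ 1)]
      constructor <;> norm_num
    obtain ⟨x, hx, hfx⟩ := intermediate_value_uIcc (hcf.mono hsub) hmem
    simp only at hfx
    rcases hf01 x (hsub hx) with h' | h' <;> rw [h'] at hfx <;> norm_num at hfx
  set k₁ := (R + 1) * deriv ψ (R + 1) with hk₁def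
  have hk₁mem : k₁ = 0 ∨ k₁ = 1 := hf01 (R + 1) hR1
  have hfconst : ∀ ρ ∈ Set.Ioi R, ρ * deriv ψ ρ = k₁ := by
    intro ρ hρ
    rcases hf01 ρ hρ with h1 | h1 <;> rcases hk₁mem with h2 | h2
    · rw [h1, h2]
    · exact absurd ⟨h1, h2⟩ (ivt ρ hρ (R + 1) hR1)
    · exact absurd ⟨h2, h1⟩ (ivt (R + 1) hR1 ρ hρ)
    · rw [h1, h2]
  -- Step 10: ψ = k₁ log + k₂
  have hlogd : ∀ ρ ∈ Set.Ioi R, DifferentiableAt ℝ (fun x => k₁ * Real.log x) ρ :=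
    fun ρ hρ => (Real.differentiableAt_log (hR.trans hρ).ne').const_mul k₁
  have hgconst := const_on_Ioi_of_deriv_zero (f := fun x => ψ x - k₁ * Real.log x)
    (fun x hx => (hψd x hx).sub (hlogd x hx))
    (fun x hx => by
      have hx0 : x ≠ 0 := (hR.trans hx).ne'
      rw [deriv_fun_sub (hψd x hx) (hlogd x hx),
        deriv_const_mul k₁ (Real.differentiableAt_log hx0), Real.deriv_log]
      have hfx := hfconst x hx
      field_simp
      linarith)
  set k₂ := ψ (R + 1) - k₁ * Real.log (R + 1) with hk₂def
  have hψeq : ∀ ρ ∈ Set.Ioi R, ψ ρ = k₁ * Real.log ρ + k₂ := by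
    intro ρ hρ
    have := hgconst ρ hρ (R + 1) hR1
    linarith [this]
  refine ⟨hvconst, hp0, hε0, ⟨C, hC⟩, k₁, by rcases hk₁mem with h | h <;> simp [h],
    k₂, k₂ + C, fun ρ hρ => ⟨hψeq ρ hρ, ?_⟩⟩
  have h1 := hC ρ hρ
  have h2 := hψeq ρ hρ
  linarith
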